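/- Let H⁽ⁱ⁾, i = 1,...,M, be symmetric positive definite n×n matrices with eigenvalues λ₁⁽ⁱ⁾ ≥ ... ≥ λₙ⁽ⁱ⁾ > 0. Let Ĥ⁽ⁱ⁾ be the approximation of H⁽ⁱ⁾ using its top q⁽ⁱ⁾ eigenpairs and approximation parameter ρ⁽ⁱ⁾ = (λ_{q⁽ⁱ⁾+1}⁽ⁱ⁾ + λₙ⁽ⁱ⁾)/2. Let Ĥ = (1/M)Σᵢ Ĥ⁽ⁱ⁾ and H = (1/M)Σᵢ H⁽ⁱ⁾. Then ‖I − Ĥ^{-1}H‖ ≤ 1 − λ̄ₙ/ρ̄, where ρ̄ = (1/M)Σᵢ ρ⁽ⁱ⁾ and λ̄ₙ = (1/M)Σᵢ λₙ⁽ⁱ⁾. -/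
import Mathlib


open scoped RealInnerProductSpace

/-- Rank-one projection `x ↦ ⟪v, x⟫ • v`. -/
noncomputable def projCL {n : ℕ} (v : EuclideanSpace ℝ (Fin n)) :
    EuclideanSpace ℝ (Fin n) →L[ℝ] EuclideanSpace ℝ (Fin n) :=
  (innerSL ℝ v).smulRight v

/-- The approximation `Ĥ(ρ,q)` keeping the top `q` eigenpairs and replacing the
remaining eigenvalues by `ρ`. -/
noncomputable def hatH {n : ℕ} (v : OrthonormalBasis (Fin n) ℝ (EuclideanSpace ℝ (Fin n)))
    (lam : Fin n → ℝ) (q : ℕ) (ρ : ℝ) :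
    EuclideanSpace ℝ (Fin n) →L[ℝ] EuclideanSpace ℝ (Fin n) :=
  ∑ k : Fin n, (if (k : ℕ) < q then lam k else ρ) • projCL (v k)

/-- The inverse of `Ĥ(ρ,q)`. -/
noncomputable def hatHinv {n : ℕ} (v : OrthonormalBasis (Fin n) ℝ (EuclideanSpace ℝ (Fin n)))
    (lam : Fin n → ℝ) (q : ℕ) (ρ : ℝ) :
    EuclideanSpace ℝ (Fin n) →L[ℝ] EuclideanSpace ℝ (Fin n) :=
  ∑ k : Fin n, (if (k : ℕ) < q then (lam k)⁻¹ else ρ⁻¹) • projCL (v k)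

/-- Iteration matrix `I − η Ĥ(ρ,q)⁻¹ H`. -/
noncomputable def iterMat {n : ℕ} (H : EuclideanSpace ℝ (Fin n) →L[ℝ] EuclideanSpace ℝ (Fin n))
    (v : OrthonormalBasis (Fin n) ℝ (EuclideanSpace ℝ (Fin n)))
    (lam : Fin n → ℝ) (q : ℕ) (ρ η : ℝ) :
    EuclideanSpace ℝ (Fin n) →L[ℝ] EuclideanSpace ℝ (Fin n) :=
  ContinuousLinearMap.id ℝ _ - η • ((hatHinv v lam q ρ).comp H)

lemma diag_apply {n : ℕ} (v : OrthonormalBasis (Fin n) ℝ (EuclideanSpace ℝ (Fin n)))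
    (c : Fin n → ℝ) (x : EuclideanSpace ℝ (Fin n)) :
    (∑ k, c k • projCL (v k)) x = ∑ k, (c k * ⟪v k, x⟫) • v k := by
  simp [projCL, ContinuousLinearMap.sum_apply, mul_smul]

lemma diag_norm_sq {n : ℕ} (v : OrthonormalBasis (Fin n) ℝ (EuclideanSpace ℝ (Fin n)))
    (c : Fin n → ℝ) (x : EuclideanSpace ℝ (Fin n)) :
    ‖(∑ k, c k • projCL (v k)) x‖ ^ 2 = ∑ k, (c k * ⟪v k, x⟫) ^ 2 := by
  rw [← real_inner_self_eq_norm_sq, diag_apply, v.orthonormal.inner_sum]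
  simp [sq]

lemma parseval {n : ℕ} (v : OrthonormalBasis (Fin n) ℝ (EuclideanSpace ℝ (Fin n)))
    (x : EuclideanSpace ℝ (Fin n)) :
    ∑ k, ⟪v k, x⟫ ^ 2 = ‖x‖ ^ 2 := by
  have h1 : (∑ k, (fun _ : Fin n => (1:ℝ)) k • projCL (v k)) x = x := by
    rw [diag_apply]; simpa using v.sum_repr' x
  have h2 := diag_norm_sq v (fun _ => 1) x
  rw [h1] at h2
  simpa using h2.symm

lemma diag_inner {n : ℕ} (v : OrthonormalBasis (Fin n) ℝ (EuclideanSpace ℝ (Fin n)))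
    (c : Fin n → ℝ) (x : EuclideanSpace ℝ (Fin n)) :
    ⟪(∑ k, c k • projCL (v k)) x, x⟫ = ∑ k, c k * ⟪v k, x⟫ ^ 2 := by
  rw [diag_apply, sum_inner]
  refine Finset.sum_congr rfl fun k _ => ?_
  rw [real_inner_smul_left]; ring

lemma diag_opNorm_le {n : ℕ} (v : OrthonormalBasis (Fin n) ℝ (EuclideanSpace ℝ (Fin n)))
    (c : Fin n → ℝ) (C : ℝ) (hC : 0 ≤ C) (h : ∀ k, |c k| ≤ C) :
    ‖∑ k, c k • projCL (v k)‖ ≤ C := by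
  refine ContinuousLinearMap.opNorm_le_bound _ hC fun x => ?_
  have hsq : ‖(∑ k, c k • projCL (v k)) x‖ ^ 2 ≤ (C * ‖x‖) ^ 2 := by
    rw [diag_norm_sq, mul_pow, ← parseval v x, Finset.mul_sum]
    refine Finset.sum_le_sum fun k _ => ?_
    rw [mul_pow]
    have : (c k) ^ 2 ≤ C ^ 2 := by
      have := h k; nlinarith [abs_nonneg (c k), sq_abs (c k)]
    nlinarith [sq_nonneg (⟪v k, x⟫)]
  exact le_of_sq_le_sq hsq (by positivity)

lemma diag_coercive {n : ℕ} (v : OrthonormalBasis (Fin n) ℝ (EuclideanSpace ℝ (Fin n)))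
    (c : Fin n → ℝ) (r : ℝ) (h : ∀ k, r ≤ c k) (x : EuclideanSpace ℝ (Fin n)) :
    r * ‖x‖ ^ 2 ≤ ⟪(∑ k, c k • projCL (v k)) x, x⟫ := by
  rw [diag_inner, ← parseval v x, Finset.mul_sum]
  exact Finset.sum_le_sum fun k _ => mul_le_mul_of_nonneg_right (h k) (sq_nonneg _)

/-- federated approximation.  With `M+1` agents, local eigenpairs and
`ρ⁽ⁱ⁾ = (λ_{q⁽ⁱ⁾+1}⁽ⁱ⁾ + λ_n⁽ⁱ⁾)/2`, the averaged approximation `Ĥ` satisfies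
`‖I − Ĥ⁻¹H‖ ≤ 1 − λ̄_n/ρ̄`. -/
theorem stmt3 (n M : ℕ) (q : Fin (M + 1) → ℕ) (hq : ∀ i, q i ≤ n)
    (v : Fin (M + 1) → OrthonormalBasis (Fin (n + 1)) ℝ (EuclideanSpace ℝ (Fin (n + 1))))
    (lam : Fin (M + 1) → Fin (n + 1) → ℝ)
    (Hi : Fin (M + 1) → (EuclideanSpace ℝ (Fin (n + 1)) →L[ℝ] EuclideanSpace ℝ (Fin (n + 1))))
    (hmono : ∀ i, ∀ k l : Fin (n + 1), k ≤ l → lam i l ≤ lam i k)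
    (hpos : ∀ i k, 0 < lam i k)
    (hHi : ∀ i k, Hi i (v i k) = lam i k • v i k)
    (ρi : Fin (M + 1) → ℝ)
    (hρi : ∀ i, ρi i = (lam i ⟨q i, Nat.lt_succ_of_le (hq i)⟩ + lam i (Fin.last n)) / 2)
    (H Hhat HhatInv : EuclideanSpace ℝ (Fin (n + 1)) →L[ℝ] EuclideanSpace ℝ (Fin (n + 1)))
    (hH : H = ((M : ℝ) + 1)⁻¹ • ∑ i, Hi i)
    (hHhat : Hhat = ((M : ℝ) + 1)⁻¹ • ∑ i, hatH (v i) (lam i) (q i) (ρi i))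
    (hinv₁ : HhatInv.comp Hhat = ContinuousLinearMap.id ℝ _)
    (hinv₂ : Hhat.comp HhatInv = ContinuousLinearMap.id ℝ _) :
    ‖ContinuousLinearMap.id ℝ (EuclideanSpace ℝ (Fin (n + 1))) - HhatInv.comp H‖ ≤
      1 - (((M : ℝ) + 1)⁻¹ * ∑ i, lam i (Fin.last n)) / (((M : ℝ) + 1)⁻¹ * ∑ i, ρi i) := by
  set ρbar : ℝ := ((M : ℝ) + 1)⁻¹ * ∑ i, ρi i with hρbar
  set lbar : ℝ := ((M : ℝ) + 1)⁻¹ * ∑ i, lam i (Fin.last n) with hlbar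
  have hMpos : (0:ℝ) < (M : ℝ) + 1 := by positivity
  have hqle : ∀ i, lam i (Fin.last n) ≤ lam i ⟨q i, Nat.lt_succ_of_le (hq i)⟩ :=
    fun i => hmono i _ _ (Fin.le_last _)
  have hρ_le : ∀ i, ρi i ≤ lam i ⟨q i, Nat.lt_succ_of_le (hq i)⟩ := by
    intro i; rw [hρi i]; linarith [hqle i]
  have hρ_ge : ∀ i, lam i (Fin.last n) ≤ ρi i := by
    intro i; rw [hρi i]; linarith [hqle i]
  have hρpos : ∀ i, 0 < ρi i := fun i => lt_of_lt_of_le (hpos i _) (hρ_ge i)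
  have hρbarpos : 0 < ρbar := by
    rw [hρbar]
    exact mul_pos (by positivity) (Finset.sum_pos (fun i _ => hρpos i) Finset.univ_nonempty)
  -- Hi in diagonal form
  have hHi' : ∀ i, Hi i = ∑ k, lam i k • projCL (v i k) := by
    intro i
    apply ContinuousLinearMap.coe_injective
    apply (v i).toBasis.ext
    intro j
    have h1 : (∑ k, lam i k • projCL (v i k)) ((v i) j) = lam i j • (v i) j := by
      rw [diag_apply]
      have horth := orthonormal_iff_ite.mp (v i).orthonormal
      simp only [horth]
      simp [Finset.sum_ite_eq', mul_ite, ite_smul]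
    simp only [OrthonormalBasis.coe_toBasis, ContinuousLinearMap.coe_coe]
    rw [hHi i j, ← h1]
  -- difference in diagonal form
  have hdiff : ∀ i, hatH (v i) (lam i) (q i) (ρi i) - Hi i
      = ∑ k : Fin (n + 1),
          ((if (k : ℕ) < q i then lam i k else ρi i) - lam i k) • projCL (v i k) := by
    intro i
    rw [hHi' i, hatH, ← Finset.sum_sub_distrib]
    exact Finset.sum_congr rfl fun k _ => (sub_smul _ _ _).symm
  have hdnorm : ∀ i, ‖hatH (v i) (lam i) (q i) (ρi i) - Hi i‖ ≤ ρi i - lam i (Fin.last n) := by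
    intro i
    rw [hdiff i]
    refine diag_opNorm_le _ _ _ (by linarith [hρ_ge i]) fun k => ?_
    by_cases hk : (k : ℕ) < q i
    · simp only [hk, if_true, sub_self, abs_zero]
      linarith [hρ_ge i]
    · simp only [hk, if_false]
      have hk1 : lam i k ≤ lam i ⟨q i, Nat.lt_succ_of_le (hq i)⟩ := by
        refine hmono i _ _ ?_
        exact Fin.mk_le_of_le_val (Nat.le_of_not_lt hk)
      have hk2 : lam i (Fin.last n) ≤ lam i k := hmono i _ _ (Fin.le_last _)
      have hρe := hρi i
      rw [abs_le]
      constructor <;> [linarith; linarith]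
  -- subtraction decomposition
  have hsub : Hhat - H
      = ((M : ℝ) + 1)⁻¹ • ∑ i, (hatH (v i) (lam i) (q i) (ρi i) - Hi i) := by
    rw [hHhat, hH, Finset.sum_sub_distrib]
    ext x
    simp [ContinuousLinearMap.sub_apply, ContinuousLinearMap.smul_apply, smul_sub]
  have hnormsub : ‖Hhat - H‖ ≤ ρbar - lbar := by
    rw [hsub]
    have h1 : ‖((M : ℝ) + 1)⁻¹ • ∑ i, (hatH (v i) (lam i) (q i) (ρi i) - Hi i)‖
        ≤ ((M : ℝ) + 1)⁻¹ * ‖∑ i, (hatH (v i) (lam i) (q i) (ρi i) - Hi i)‖ := by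
      have h := ContinuousLinearMap.opNorm_smul_le (((M : ℝ) + 1)⁻¹)
        (∑ i, (hatH (v i) (lam i) (q i) (ρi i) - Hi i))
      rwa [Real.norm_eq_abs, abs_of_pos (by positivity)] at h
    have h2 : ‖∑ i, (hatH (v i) (lam i) (q i) (ρi i) - Hi i)‖
        ≤ ∑ i, (ρi i - lam i (Fin.last n)) :=
      (norm_sum_le _ _).trans (Finset.sum_le_sum fun i _ => hdnorm i)
    have h3 : ((M : ℝ) + 1)⁻¹ * ∑ i, (ρi i - lam i (Fin.last n)) = ρbar - lbar := by
      rw [Finset.sum_sub_distrib, hρbar, hlbar]; ring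
    calc ‖((M : ℝ) + 1)⁻¹ • ∑ i, (hatH (v i) (lam i) (q i) (ρi i) - Hi i)‖
        ≤ ((M : ℝ) + 1)⁻¹ * ‖∑ i, (hatH (v i) (lam i) (q i) (ρi i) - Hi i)‖ := h1
      _ ≤ ((M : ℝ) + 1)⁻¹ * ∑ i, (ρi i - lam i (Fin.last n)) :=
          mul_le_mul_of_nonneg_left h2 (by positivity)
      _ = ρbar - lbar := h3
  -- coercivity of Hhat
  have hcoer : ∀ x : EuclideanSpace ℝ (Fin (n + 1)), ρbar * ‖x‖ ^ 2 ≤ ⟪Hhat x, x⟫ := by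
    intro x
    rw [hHhat]
    have h1 : ∀ i, ρi i * ‖x‖ ^ 2 ≤ ⟪(hatH (v i) (lam i) (q i) (ρi i)) x, x⟫ := by
      intro i
      refine diag_coercive (v i) _ (ρi i) (fun k => ?_) x
      by_cases hk : (k : ℕ) < q i
      · simp only [hk, if_true]
        exact (hρ_le i).trans (hmono i _ _ (Fin.mk_le_of_le_val (Nat.le_of_lt hk)))
      · simp [hk]
    have h2 : ⟪(((M : ℝ) + 1)⁻¹ • ∑ i, hatH (v i) (lam i) (q i) (ρi i)) x, x⟫
        = ((M : ℝ) + 1)⁻¹ * ∑ i, ⟪(hatH (v i) (lam i) (q i) (ρi i)) x, x⟫ := by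
      rw [ContinuousLinearMap.smul_apply, real_inner_smul_left,
        ContinuousLinearMap.sum_apply, sum_inner]
    rw [h2]
    have h3 : ∑ i, ρi i * ‖x‖ ^ 2 ≤ ∑ i, ⟪(hatH (v i) (lam i) (q i) (ρi i)) x, x⟫ :=
      Finset.sum_le_sum fun i _ => h1 i
    have h4 : ρbar * ‖x‖ ^ 2 = ((M : ℝ) + 1)⁻¹ * ∑ i, ρi i * ‖x‖ ^ 2 := by
      rw [hρbar, ← Finset.sum_mul]; ring
    rw [h4]
    exact mul_le_mul_of_nonneg_left h3 (by positivity)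
  -- op norm bound on HhatInv
  have hinvnorm : ‖HhatInv‖ ≤ ρbar⁻¹ := by
    refine ContinuousLinearMap.opNorm_le_bound _ (inv_nonneg.mpr hρbarpos.le) fun x => ?_
    set y := HhatInv x with hy
    have hHy : Hhat y = x := by
      have := ContinuousLinearMap.ext_iff.mp hinv₂ x
      simpa using this
    have h1 := hcoer y
    rw [hHy] at h1
    have h2 : ⟪x, y⟫ ≤ ‖x‖ * ‖y‖ := real_inner_le_norm x y
    rcases eq_or_lt_of_le (norm_nonneg y) with h0 | h0
    · rw [← h0]
      positivity
    · rw [inv_mul_eq_div, le_div_iff₀ hρbarpos]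
      nlinarith
  -- final assembly
  have hkey : ContinuousLinearMap.id ℝ (EuclideanSpace ℝ (Fin (n + 1))) - HhatInv.comp H
      = HhatInv.comp (Hhat - H) := by
    rw [ContinuousLinearMap.comp_sub, hinv₁]
  rw [hkey]
  have hfinal : ρbar⁻¹ * (ρbar - lbar) = 1 - lbar / ρbar := by
    field_simp
  calc ‖HhatInv.comp (Hhat - H)‖ ≤ ‖HhatInv‖ * ‖Hhat - H‖ :=
        ContinuousLinearMap.opNorm_comp_le _ _
    _ ≤ ρbar⁻¹ * (ρbar - lbar) :=
        mul_le_mul hinvnorm hnormsub (norm_nonneg _) (inv_nonneg.mpr hρbarpos.le)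
    _ = 1 - lbar / ρbar := hfinal
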